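/- Let N be a positive integer, let β > 0 and C ∈ (0,1) be real numbers, and let ε_1, ..., ε_N be positive real numbers. Then Σ_{k=1}^{N} ε_k^{−β} ≥ (Σ_{k=1}^{N} C^{N−k} ε_k)^{−β} · ((1 − C^{Nβ/(β+1)}) / (1 − C^{β/(β+1)}))^{β+1}. -/

import Mathlib

/-- Lower bound for the constrained minimization of Section IV.B: for positive
`ε 1, ..., ε N`, `β > 0` and `C ∈ (0,1)`,
`∑ (ε k)^(-β) ≥ (∑ C^(N-k) ε k)^(-β) · ((1 - C^(Nβ/(β+1)))/(1 - C^(β/(β+1))))^(β+1)`. -/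
theorem grid_minimization_lower_bound
    (N : ℕ) (hN : 0 < N) (β C : ℝ) (hβ : 0 < β) (hC0 : 0 < C) (hC1 : C < 1)
    (ε : ℕ → ℝ) (hε : ∀ k ∈ Finset.Icc 1 N, 0 < ε k) :
    (∑ k ∈ Finset.Icc 1 N, (ε k) ^ (-β)) ≥
      (∑ k ∈ Finset.Icc 1 N, C ^ (N - k) * ε k) ^ (-β) *
        ((1 - C ^ ((N : ℝ) * β / (β + 1))) / (1 - C ^ (β / (β + 1)))) ^ (β + 1) := by
  have hβ1 : (0:ℝ) < β + 1 := by linarith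
  set r : ℝ := C ^ (β / (β + 1)) with hr
  have hr0 : 0 < r := Real.rpow_pos_of_pos hC0 _
  have hr1 : r < 1 := Real.rpow_lt_one hC0.le hC1 (by positivity)
  set S : ℝ := ∑ k ∈ Finset.Icc 1 N, C ^ (N - k) * ε k with hS
  set A : ℝ := ∑ k ∈ Finset.Icc 1 N, (ε k) ^ (-β) with hA
  have hne : (Finset.Icc 1 N).Nonempty := ⟨1, Finset.mem_Icc.mpr ⟨le_refl 1, hN⟩⟩
  have hSpos : 0 < S :=
    Finset.sum_pos (fun k hk => mul_pos (pow_pos hC0 _) (hε k hk)) hne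
  have hApos : 0 < A := Finset.sum_pos (fun k hk => Real.rpow_pos_of_pos (hε k hk) _) hne
  -- per-term identity for Hölder
  have hterm : ∀ k ∈ Finset.Icc 1 N,
      r ^ (N - k) = (C ^ (N - k) * ε k) ^ (β / (β + 1)) * ((ε k) ^ (-β)) ^ (1 / (β + 1)) := by
    intro k hk
    have hεk := hε k hk
    rw [Real.mul_rpow (by positivity) hεk.le, ← Real.rpow_natCast C (N - k),
      ← Real.rpow_mul hC0.le, ← Real.rpow_natCast r (N - k), hr, ← Real.rpow_mul hC0.le,
      ← Real.rpow_mul hεk.le, mul_assoc, ← Real.rpow_add hεk,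
      show β / (β + 1) + -β * (1 / (β + 1)) = 0 by field_simp; ring, Real.rpow_zero, mul_one,
      mul_comm (β / (β + 1))]
  -- Hölder inequality
  have hpq : Real.HolderConjugate ((β + 1) / β) (β + 1) := by
    rw [Real.holderConjugate_iff]
    constructor
    · rw [lt_div_iff₀ hβ]; linarith
    · field_simp
  have hH := Real.inner_le_Lp_mul_Lq_of_nonneg (s := Finset.Icc 1 N)
      (f := fun k => (C ^ (N - k) * ε k) ^ (β / (β + 1)))
      (g := fun k => ((ε k) ^ (-β)) ^ (1 / (β + 1))) hpq
      (fun k hk => Real.rpow_nonneg (mul_nonneg (pow_nonneg hC0.le _) (hε k hk).le) _)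
      (fun k hk => Real.rpow_nonneg (Real.rpow_nonneg (hε k hk).le _) _)
  rw [Finset.sum_congr rfl (fun k hk => (hterm k hk).symm)] at hH
  have hfp : ∀ k ∈ Finset.Icc 1 N,
      ((C ^ (N - k) * ε k) ^ (β / (β + 1))) ^ ((β + 1) / β) = C ^ (N - k) * ε k := by
    intro k hk
    rw [← Real.rpow_natCast C (N - k)]
    rw [← Real.rpow_mul (mul_nonneg (Real.rpow_nonneg hC0.le _) (hε k hk).le), show β / (β + 1) * ((β + 1) / β) = 1 by field_simp,
      Real.rpow_one]
  have hgq : ∀ k ∈ Finset.Icc 1 N,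
      (((ε k) ^ (-β)) ^ (1 / (β + 1))) ^ (β + 1) = (ε k) ^ (-β) := by
    intro k hk
    rw [← Real.rpow_mul (Real.rpow_nonneg (hε k hk).le _),
      show 1 / (β + 1) * (β + 1) = 1 by field_simp, Real.rpow_one]
  rw [Finset.sum_congr rfl hfp, Finset.sum_congr rfl hgq, ← hS, ← hA] at hH
  have hp1 : 1 / ((β + 1) / β) = β / (β + 1) := one_div_div _ _
  rw [hp1] at hH
  -- geometric sum
  have hgeom : (∑ k ∈ Finset.Icc 1 N, r ^ (N - k)) = (1 - r ^ N) / (1 - r) := by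
    have : (∑ k ∈ Finset.Icc 1 N, r ^ (N - k)) = ∑ j ∈ Finset.range N, r ^ j := by
      apply Finset.sum_nbij' (fun k => N - k) (fun j => N - j)
      · intro k hk
        simp only [Finset.mem_Icc] at hk
        simp only [Finset.mem_range]
        omega
      · intro j hj
        simp only [Finset.mem_range] at hj
        simp only [Finset.mem_Icc]
        omega
      · intro k hk; simp only [Finset.mem_Icc] at hk; omega
      · intro j hj; simp only [Finset.mem_range] at hj; omega
      · intro k hk; rfl
    rw [this, geom_sum_eq hr1.ne N]
    rw [← neg_div_neg_eq]; ring_nf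
  rw [hgeom] at hH
  have hTpos : 0 < (1 - r ^ N) / (1 - r) :=
    div_pos (by have := pow_lt_one₀ hr0.le hr1 hN.ne'; linarith) (by linarith)
  -- C ^ (N β/(β+1)) = r ^ N
  have hCN : C ^ ((N : ℝ) * β / (β + 1)) = r ^ N := by
    rw [hr, ← Real.rpow_natCast (C ^ (β / (β + 1))) N, ← Real.rpow_mul hC0.le]
    congr 1; ring
  rw [ge_iff_le, hCN]
  -- raise Hölder to power β+1
  have h2 : ((1 - r ^ N) / (1 - r)) ^ (β + 1) ≤ S ^ β * A := by
    calc ((1 - r ^ N) / (1 - r)) ^ (β + 1)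
        ≤ (S ^ (β / (β + 1)) * A ^ (1 / (β + 1))) ^ (β + 1) :=
          Real.rpow_le_rpow hTpos.le hH hβ1.le
      _ = S ^ β * A := by
          rw [Real.mul_rpow (by positivity) (by positivity),
            ← Real.rpow_mul hSpos.le, ← Real.rpow_mul hApos.le,
            show β / (β + 1) * (β + 1) = β by field_simp,
            show 1 / (β + 1) * (β + 1) = 1 by field_simp, Real.rpow_one]
  rw [Real.rpow_neg hSpos.le, inv_mul_le_iff₀ (Real.rpow_pos_of_pos hSpos β)]
  exact h2
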